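/- Let G be a finite simple graph on vertex set {x_1,…,x_n} without isolated vertices and let H be a graph obtained from G by adding one new vertex v and some new edges joining v to vertices of G (so V(H) = V(G) ∪ {v} and E(H) consists of E(G) together with edges from v to a subset of V(G)). If a = (1,…,1) ∈ ℕ^n is an irreducible α_0(G)-cover of the blocker Υ(G) and α_0(H) = α_0(G) + 1, then a' = (1,…,1) ∈ ℕ^{n+1} is an irreducible α_0(H)-cover of the blocker Υ(H). -/

import Mathlib

/-- `C` is a vertex cover of `G`: every edge has an endpoint in `C`. -/
def IsVC {n : ℕ} (G : SimpleGraph (Fin n)) (C : Finset (Fin n)) : Prop :=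
  ∀ i j : Fin n, G.Adj i j → i ∈ C ∨ j ∈ C

/-- `C` is a minimal vertex cover of `G`. -/
def IsMinVC {n : ℕ} (G : SimpleGraph (Fin n)) (C : Finset (Fin n)) : Prop :=
  IsVC G C ∧ ∀ D : Finset (Fin n), D ⊂ C → ¬ IsVC G D

/-- A nonzero vector `a : ℕ^n` is a `b`-cover of the blocker `Υ(G)` (the clutter of
minimal vertex covers of `G`) if `∑_{i ∈ C} a i ≥ b` for every minimal vertex
cover `C` of `G`. -/
def IsUpsCover {n : ℕ} (G : SimpleGraph (Fin n)) (a : Fin n → ℕ) (b : ℕ) : Prop :=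
  a ≠ 0 ∧ ∀ C : Finset (Fin n), IsMinVC G C → b ≤ ∑ i ∈ C, a i

/-- A `b`-cover of the blocker `Υ(G)` is irreducible if it is not the sum of a
(nonzero) `i`-cover and a (nonzero) `j`-cover of `Υ(G)` with `b = i + j`. -/
def IsIrredUpsCover {n : ℕ} (G : SimpleGraph (Fin n)) (a : Fin n → ℕ) (b : ℕ) : Prop :=
  IsUpsCover G a b ∧
    ¬ ∃ (c d : Fin n → ℕ) (i j : ℕ),
        IsUpsCover G c i ∧ IsUpsCover G d j ∧ a = c + d ∧ b = i + j

/-- The vertex covering number `α₀` of the induced subgraph of `G` on the set of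
vertices `S`: the least cardinality of a set `C ⊆ S` covering every edge of `G`
with both endpoints in `S`. -/
noncomputable def alpha0On {n : ℕ} (G : SimpleGraph (Fin n)) (S : Finset (Fin n)) : ℕ :=
  sInf {k : ℕ | ∃ C : Finset (Fin n), C ⊆ S ∧
    (∀ i ∈ S, ∀ j ∈ S, G.Adj i j → i ∈ C ∨ j ∈ C) ∧ C.card = k}

/-- Every vertex cover contains a minimal vertex cover. -/
lemma exists_min_vc_subset {m : ℕ} (G : SimpleGraph (Fin m)) (C : Finset (Fin m))
    (h : IsVC G C) : ∃ D ⊆ C, IsMinVC G D := by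
  induction C using Finset.strongInductionOn with
  | _ C ih =>
    by_cases hmin : ∀ D : Finset (Fin m), D ⊂ C → ¬ IsVC G D
    · exact ⟨C, subset_rfl, h, hmin⟩
    · push_neg at hmin
      obtain ⟨D, hD, hDvc⟩ := hmin
      obtain ⟨E, hE, hEmin⟩ := ih D hD hDvc
      exact ⟨E, hE.trans hD.subset, hEmin⟩

lemma alpha0_le_card {m : ℕ} (G : SimpleGraph (Fin m)) (C : Finset (Fin m))
    (h : IsVC G C) : alpha0On G Finset.univ ≤ C.card :=
  Nat.sInf_le ⟨C, Finset.subset_univ C, fun i _ j _ hij => h i j hij, rfl⟩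

/-- There is a minimal vertex cover of minimum cardinality. -/
lemma exists_minvc_card {m : ℕ} (G : SimpleGraph (Fin m)) :
    ∃ C : Finset (Fin m), IsMinVC G C ∧ C.card = alpha0On G Finset.univ := by
  have hne : {k : ℕ | ∃ C : Finset (Fin m), C ⊆ Finset.univ ∧
      (∀ i ∈ Finset.univ, ∀ j ∈ Finset.univ, G.Adj i j → i ∈ C ∨ j ∈ C) ∧
      C.card = k}.Nonempty :=
    ⟨m, Finset.univ, subset_rfl, fun i _ j _ _ => Or.inl (Finset.mem_univ i),
      Finset.card_univ.trans (Fintype.card_fin m)⟩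
  obtain ⟨C, -, hCvc, hCcard⟩ := Nat.sInf_mem hne
  have hCvc' : IsVC G C := fun i j hij =>
    hCvc i (Finset.mem_univ i) j (Finset.mem_univ j) hij
  refine ⟨C, ⟨hCvc', ?_⟩, hCcard⟩
  intro D hD hDvc
  have h1 := alpha0_le_card G D hDvc
  have h2 := Finset.card_lt_card hD
  have h3 : C.card = alpha0On G Finset.univ := hCcard
  omega

theorem cone_construction_irreducible_cover {n : ℕ}
    (G : SimpleGraph (Fin n)) (hG : ∀ i : Fin n, ∃ j : Fin n, G.Adj i j)
    (H : SimpleGraph (Fin (n + 1)))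
    -- `H` is obtained from `G` by adding the new vertex `Fin.last n` and some
    -- edges joining it to vertices of `G`: the edges of `H` among the old
    -- vertices are exactly the edges of `G`.
    (hHG : ∀ i j : Fin n, H.Adj i.castSucc j.castSucc ↔ G.Adj i j)
    (h1 : IsIrredUpsCover G (fun _ => 1) (alpha0On G Finset.univ))
    (hα : alpha0On H Finset.univ = alpha0On G Finset.univ + 1) :
    IsIrredUpsCover H (fun _ => 1) (alpha0On H Finset.univ) := by
  set v : Fin (n + 1) := Fin.last n with hv
  -- a minimal vertex cover of H avoiding v
  have hD0 : ∃ D0 : Finset (Fin (n + 1)), IsMinVC H D0 ∧ v ∉ D0 := by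
    have hvc : IsVC H (Finset.univ.erase v) := by
      intro a b hab
      rcases eq_or_ne a v with rfl | ha
      · exact Or.inr (Finset.mem_erase.mpr ⟨hab.ne', Finset.mem_univ b⟩)
      · exact Or.inl (Finset.mem_erase.mpr ⟨ha, Finset.mem_univ a⟩)
    obtain ⟨D, hDsub, hDmin⟩ := exists_min_vc_subset H _ hvc
    exact ⟨D, hDmin, fun hvD => (Finset.mem_erase.mp (hDsub hvD)).1 rfl⟩
  -- key step: bound over lifted covers
  have step : ∀ (e : Fin (n + 1) → ℕ) (b : ℕ), IsUpsCover H e b →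
      ∀ C : Finset (Fin n), IsMinVC G C →
        b ≤ (∑ x ∈ C, e x.castSucc) + e v := by
    intro e b he C hC
    set Chat : Finset (Fin (n + 1)) := C.image Fin.castSucc ∪ {v} with hChat
    have hvnot : v ∉ C.image Fin.castSucc := by
      simp only [Finset.mem_image]
      rintro ⟨y, -, hy⟩
      exact (Fin.castSucc_lt_last y).ne hy
    have hChatvc : IsVC H Chat := by
      intro a b hab
      rcases eq_or_ne a v with rfl | ha
      · exact Or.inl (Finset.mem_union_right _ (Finset.mem_singleton_self v))
      rcases eq_or_ne b v with rfl | hb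
      · exact Or.inr (Finset.mem_union_right _ (Finset.mem_singleton_self v))
      obtain ⟨a', rfl⟩ := Fin.exists_castSucc_eq.mpr ha
      obtain ⟨b', rfl⟩ := Fin.exists_castSucc_eq.mpr hb
      rcases hC.1 a' b' ((hHG a' b').mp hab) with h | h
      · exact Or.inl (Finset.mem_union_left _ (Finset.mem_image_of_mem _ h))
      · exact Or.inr (Finset.mem_union_left _ (Finset.mem_image_of_mem _ h))
    obtain ⟨D, hDsub, hDmin⟩ := exists_min_vc_subset H Chat hChatvc
    have h1' : b ≤ ∑ x ∈ D, e x := he.2 D hDmin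
    have h2' : ∑ x ∈ D, e x ≤ ∑ x ∈ Chat, e x :=
      Finset.sum_le_sum_of_subset hDsub
    have h3' : ∑ x ∈ Chat, e x = (∑ x ∈ C, e x.castSucc) + e v := by
      rw [hChat, Finset.sum_union (Finset.disjoint_singleton_right.mpr hvnot),
        Finset.sum_image (fun x _ y _ h => Fin.castSucc_injective n h),
        Finset.sum_singleton]
    omega
  -- a minimum-cardinality minimal vertex cover of G
  obtain ⟨C0, hC0min, hC0card⟩ := exists_minvc_card G
  constructor
  · constructor
    · intro h
      exact absurd (congrFun h v) one_ne_zero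
    · intro C hC
      have := alpha0_le_card H C hC.1
      simpa using this
  · rintro ⟨c, d, i, j, hc, hd, hsum, hij⟩
    have hpt : ∀ k, c k + d k = 1 := by
      intro k
      have := congrFun hsum k
      simpa [Pi.add_apply] using this.symm
    have hij' : alpha0On G Finset.univ + 1 = i + j := by rw [← hα]; exact hij
    have hstepc := step c i hc
    have hstepd := step d j hd
    -- sums over C0 are at most its card
    have hsumc0 : (∑ x ∈ C0, c x.castSucc) ≤ alpha0On G Finset.univ := by
      calc (∑ x ∈ C0, c x.castSucc) ≤ ∑ _x ∈ C0, 1 :=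
            Finset.sum_le_sum (fun x _ => by have := hpt x.castSucc; omega)
        _ = C0.card := by simp
        _ = _ := hC0card
    have hsumd0 : (∑ x ∈ C0, d x.castSucc) ≤ alpha0On G Finset.univ := by
      calc (∑ x ∈ C0, d x.castSucc) ≤ ∑ _x ∈ C0, 1 :=
            Finset.sum_le_sum (fun x _ => by have := hpt x.castSucc; omega)
        _ = C0.card := by simp
        _ = _ := hC0card
    obtain ⟨D0, hD0min, hvD0⟩ := hD0
    -- restriction nonzero if the cover value is positive
    have restr_nonzero : ∀ (e : Fin (n + 1) → ℕ) (b : ℕ), IsUpsCover H e b →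
        1 ≤ b → (fun x : Fin n => e x.castSucc) ≠ 0 := by
      intro e b he hb h0
      have hD0sum : ∑ x ∈ D0, e x = 0 := by
        apply Finset.sum_eq_zero
        intro x hx
        have hxv : x ≠ v := fun h => hvD0 (h ▸ hx)
        obtain ⟨y, rfl⟩ := Fin.exists_castSucc_eq.mpr hxv
        exact congrFun h0 y
      have := he.2 D0 hD0min
      omega
    -- a vector vanishing at v with zero restriction is zero
    have zero_of : ∀ e : Fin (n + 1) → ℕ, e v = 0 →
        (fun x : Fin n => e x.castSucc) = 0 → e = 0 := by
      intro e hev h0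
      funext k
      rcases eq_or_ne k v with rfl | hk
      · exact hev
      · obtain ⟨y, rfl⟩ := Fin.exists_castSucc_eq.mpr hk
        exact congrFun h0 y
    apply h1.2
    rcases Nat.eq_zero_or_pos (c v) with hcv0 | hcv1
    · -- c v = 0, d v = 1
      have hdv : d v = 1 := by have := hpt v; omega
      have hj : 1 ≤ j := by
        by_contra hj
        have hi' : i = alpha0On G Finset.univ + 1 := by omega
        have := hstepc C0 hC0min
        omega
      have hdne := restr_nonzero d j hd hj
      have hcne : (fun x : Fin n => c x.castSucc) ≠ 0 := fun h0 =>
        hc.1 (zero_of c hcv0 h0)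
      refine ⟨fun x => c x.castSucc, fun x => d x.castSucc, i, j - 1,
        ⟨hcne, ?_⟩, ⟨hdne, ?_⟩, ?_, by omega⟩
      · intro C hC
        have h := hstepc C hC
        show i ≤ ∑ x ∈ C, c x.castSucc
        omega
      · intro C hC
        have h := hstepd C hC
        show j - 1 ≤ ∑ x ∈ C, d x.castSucc
        omega
      · funext x; have := hpt x.castSucc; simp only [Pi.add_apply]; omega
    · -- c v = 1, d v = 0
      have hcv1' : c v = 1 := by have := hpt v; omega
      have hdv : d v = 0 := by have := hpt v; omega
      have hi : 1 ≤ i := by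
        by_contra hi
        have hj' : j = alpha0On G Finset.univ + 1 := by omega
        have := hstepd C0 hC0min
        omega
      have hcne := restr_nonzero c i hc hi
      have hdne : (fun x : Fin n => d x.castSucc) ≠ 0 := fun h0 =>
        hd.1 (zero_of d hdv h0)
      refine ⟨fun x => c x.castSucc, fun x => d x.castSucc, i - 1, j,
        ⟨hcne, ?_⟩, ⟨hdne, ?_⟩, ?_, by omega⟩
      · intro C hC
        have h := hstepc C hC
        show i - 1 ≤ ∑ x ∈ C, c x.castSucc
        omega
      · intro C hC
        have h := hstepd C hC
        show j ≤ ∑ x ∈ C, d x.castSucc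
        omega
      · funext x; have := hpt x.castSucc; simp only [Pi.add_apply]; omega
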